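/- Fix β > 0 and for each integer m ≥ 1 let μ_{m,β} be the probability measure on ℝ^m with Lebesgue density [βΓ(m/2) / (π^{m/2} Γ(m/(2β)) 2^{m/(2β)})] exp(−(1/2)‖x‖^{2β}). Then for every ε > 0 and every m ≥ 1, μ_{m,β}({x ∈ ℝ^m : |(1/2)‖x‖^{2β} − m/(2β)| ≥ ε · m/(2β)}) ≤ 2β/(ε² m). -/

import Mathlib

open MeasureTheory Real
open Measure Set Metric
open scoped ENNReal


lemma aux_integrableOn {p q b : ℝ} (hp : 0 < p) (hq : -1 < q) (hb : 0 < b) :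
    IntegrableOn (fun x : ℝ => x ^ q * Real.exp (- b * x ^ p)) (Ioi 0) := by
  have hc : (-1:ℝ) < (q + 1) / p - 1 := by
    have : 0 < (q+1)/p := div_pos (by linarith) hp
    linarith
  have h0 : IntegrableOn (fun y : ℝ => y ^ ((q+1)/p - 1) * Real.exp (- b * y)) (Ioi 0) := by
    have := integrableOn_rpow_mul_exp_neg_mul_rpow hc one_pos hb
    simpa using this
  have h1 := (integrableOn_Ioi_comp_rpow_iff'
      (fun y : ℝ => y ^ ((q+1)/p - 1) * Real.exp (- b * y)) hp.ne').mpr h0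
  apply h1.congr_fun _ measurableSet_Ioi
  intro x hx
  have hx0 : (0:ℝ) < x := hx
  have h2 : (x ^ p) ^ ((q+1)/p - 1) = x ^ (p * ((q+1)/p - 1)) := by
    rw [← Real.rpow_mul hx0.le, mul_comm]
  simp only [smul_eq_mul, h2]
  rw [show p * ((q+1)/p - 1) = q + 1 - p by field_simp]
  rw [← mul_assoc, ← Real.rpow_add hx0]
  ring_nf

section radial
variable {β a : ℝ} (hβ : 0 < β) (ha : 0 < a)

include hβ in
lemma aux_value {q : ℝ} (hq : -1 < q) :
    ∫ y in Ioi (0:ℝ), y ^ q * Real.exp (-(1/2) * y ^ (2*β)) =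
      2 ^ ((q+1)/(2*β)) * (1/(2*β)) * Real.Gamma ((q+1)/(2*β)) := by
  have h := integral_rpow_mul_exp_neg_mul_rpow (by positivity : (0:ℝ) < 2*β) hq
    (by norm_num : (0:ℝ) < 1/2)
  rw [show ((1/2 : ℝ)) ^ (-(q+1)/(2*β)) = 2 ^ ((q+1)/(2*β)) from by
    rw [one_div, Real.inv_rpow two_pos.le, ← Real.rpow_neg two_pos.le, neg_div, neg_neg]] at h
  exact h

omit hβ ha in
lemma aux_eqOn : EqOn
    (fun y : ℝ => y ^ (2*β*a - 1) * ((1/2 * y ^ (2*β) - a)^2 * Real.exp (-(1/2) * y ^ (2*β))))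
    (fun y : ℝ => 1/4 * (y ^ (2*β*a - 1 + (2*β + 2*β)) * Real.exp (-(1/2) * y ^ (2*β)))
      - a * (y ^ (2*β*a - 1 + 2*β) * Real.exp (-(1/2) * y ^ (2*β)))
      + a^2 * (y ^ (2*β*a - 1) * Real.exp (-(1/2) * y ^ (2*β)))) (Ioi 0) := by
  intro y hy
  have hy0 : (0:ℝ) < y := hy
  simp only
  rw [Real.rpow_add hy0, Real.rpow_add hy0, Real.rpow_add hy0]
  ring

include hβ ha

lemma aux_int_radial :
    IntegrableOn (fun y : ℝ =>
      y ^ (2*β*a - 1) * ((1/2 * y ^ (2*β) - a)^2 * Real.exp (-(1/2) * y ^ (2*β)))) (Ioi 0) := by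
  have h2β : (0:ℝ) < 2*β := by positivity
  have hb : (0:ℝ) < 1/2 := by norm_num
  have hq0 : (-1:ℝ) < 2*β*a - 1 := by nlinarith
  have e0 := aux_integrableOn h2β hq0 hb
  have e1 := aux_integrableOn h2β (by nlinarith : (-1:ℝ) < 2*β*a - 1 + 2*β) hb
  have e2 := aux_integrableOn h2β (by nlinarith : (-1:ℝ) < 2*β*a - 1 + (2*β + 2*β)) hb
  have ecomb : IntegrableOn
      (fun y : ℝ => 1/4 * (y ^ (2*β*a - 1 + (2*β + 2*β)) * Real.exp (-(1/2) * y ^ (2*β)))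
        - a * (y ^ (2*β*a - 1 + 2*β) * Real.exp (-(1/2) * y ^ (2*β)))
        + a^2 * (y ^ (2*β*a - 1) * Real.exp (-(1/2) * y ^ (2*β)))) (Ioi 0) :=
    ((e2.const_mul (1/4)).sub (e1.const_mul a)).add (e0.const_mul (a^2))
  exact IntegrableOn.congr_fun ecomb (fun y hy => ((aux_eqOn) hy).symm) measurableSet_Ioi

lemma aux_radial_value :
    ∫ y in Ioi (0:ℝ),
        y ^ (2*β*a - 1) * ((1/2 * y ^ (2*β) - a)^2 * Real.exp (-(1/2) * y ^ (2*β)))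
      = 2 ^ a * Real.Gamma a / (2*β) * a := by
  have h2β : (0:ℝ) < 2*β := by positivity
  have hb : (0:ℝ) < 1/2 := by norm_num
  have hq0 : (-1:ℝ) < 2*β*a - 1 := by nlinarith
  have hq1 : (-1:ℝ) < 2*β*a - 1 + 2*β := by nlinarith
  have hq2 : (-1:ℝ) < 2*β*a - 1 + (2*β + 2*β) := by nlinarith
  have e0 := aux_integrableOn h2β hq0 hb
  have e1 := aux_integrableOn h2β hq1 hb
  have e2 := aux_integrableOn h2β hq2 hb
  have hsub : IntegrableOn
      (fun y : ℝ => 1/4 * (y ^ (2*β*a - 1 + (2*β + 2*β)) * Real.exp (-(1/2) * y ^ (2*β)))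
        - a * (y ^ (2*β*a - 1 + 2*β) * Real.exp (-(1/2) * y ^ (2*β)))) (Ioi 0) :=
    (e2.const_mul (1/4)).sub (e1.const_mul a)
  have h4 : IntegrableOn
      (fun y : ℝ => 1/4 * (y ^ (2*β*a - 1 + (2*β + 2*β)) * Real.exp (-(1/2) * y ^ (2*β)))) (Ioi 0) :=
    e2.const_mul (1/4)
  have h5 : IntegrableOn
      (fun y : ℝ => a * (y ^ (2*β*a - 1 + 2*β) * Real.exp (-(1/2) * y ^ (2*β)))) (Ioi 0) :=
    e1.const_mul a
  have h6 : IntegrableOn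
      (fun y : ℝ => a^2 * (y ^ (2*β*a - 1) * Real.exp (-(1/2) * y ^ (2*β)))) (Ioi 0) :=
    e0.const_mul (a^2)
  rw [setIntegral_congr_fun measurableSet_Ioi (aux_eqOn (β := β) (a := a))]
  rw [integral_add hsub h6, integral_sub h4 h5,
    integral_const_mul, integral_const_mul, integral_const_mul]
  rw [aux_value hβ hq0, aux_value hβ hq1, aux_value hβ hq2]
  rw [show (2*β*a - 1 + 1)/(2*β) = a by field_simp; ring,
    show (2*β*a - 1 + 2*β + 1)/(2*β) = a + 1 by field_simp; ring,
    show (2*β*a - 1 + (2*β + 2*β) + 1)/(2*β) = a + 2 by field_simp; ring]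
  rw [show a + 2 = (a + 1) + 1 by ring, Real.Gamma_add_one (by positivity),
    Real.Gamma_add_one ha.ne', Real.rpow_add two_pos, Real.rpow_add two_pos]
  simp only [Real.rpow_one]
  ring
end radial


lemma aux_lintegral_norm {E : Type*} [NormedAddCommGroup E] [NormedSpace ℝ E]
    [MeasurableSpace E] [BorelSpace E] [FiniteDimensional ℝ E] [Nontrivial E]
    (μ : Measure E) [μ.IsAddHaarMeasure] {F : ℝ → ℝ≥0∞} (hF : Measurable F) :
    ∫⁻ x, F ‖x‖ ∂μ = (Module.finrank ℝ E : ℝ≥0∞) * μ (ball 0 1) *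
      ∫⁻ y in Ioi (0:ℝ), ENNReal.ofReal (y ^ (Module.finrank ℝ E - 1)) * F y := by
  have hmeas : Measurable (fun p : sphere (0:E) 1 × Ioi (0:ℝ) => F p.2) :=
    hF.comp (measurable_subtype_coe.comp measurable_snd)
  have hg : Measurable (fun y : Ioi (0:ℝ) => F y.1) := hF.comp measurable_subtype_coe
  have hd : Measurable (fun r : Ioi (0:ℝ) =>
      ENNReal.ofReal (r.1 ^ (Module.finrank ℝ E - 1))) :=
    (measurable_subtype_coe.pow_const _).ennreal_ofReal
  calc
    ∫⁻ x, F ‖x‖ ∂μ = ∫⁻ x : ({(0)}ᶜ : Set E), F ‖x.1‖ ∂(μ.comap (↑)) := by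
      rw [lintegral_subtype_comap (measurableSet_singleton (0:E)).compl (fun x => F ‖x‖),
        restrict_compl_singleton]
    _ = ∫⁻ p : sphere (0:E) 1 × Ioi (0:ℝ), F p.2
          ∂(μ.toSphere.prod (volumeIoiPow (Module.finrank ℝ E - 1))) :=
      by
        have h := μ.measurePreserving_homeomorphUnitSphereProd.lintegral_comp_emb
          (Homeomorph.measurableEmbedding _) ((F ∘ Subtype.val ∘ Prod.snd))
        simp only [Function.comp_apply, homeomorphUnitSphereProd_apply_snd_coe] at h
        exact h
    _ = μ.toSphere univ * ∫⁻ y : Ioi (0:ℝ), F y ∂(volumeIoiPow (Module.finrank ℝ E - 1)) := by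
      rw [lintegral_prod _ hmeas.aemeasurable]
      simp [lintegral_const, mul_comm]
    _ = _ := by
      rw [toSphere_apply_univ]
      rw [Measure.volumeIoiPow, lintegral_withDensity_eq_lintegral_mul _ hd hg]
      simp only [Pi.mul_apply]
      rw [lintegral_subtype_comap measurableSet_Ioi
        (fun z : ℝ => ENNReal.ofReal (z ^ (Module.finrank ℝ E - 1)) * F z)]

/-- The standardised MGGD(0, Iₘ, β) measure on ℝ^m: the measure with Lebesgue density
`[β Γ(m/2) / (π^{m/2} Γ(m/(2β)) 2^{m/(2β)})] exp(−(1/2)‖x‖^{2β})`. -/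
noncomputable def mggdStd (m : ℕ) (β : ℝ) : Measure (EuclideanSpace ℝ (Fin m)) :=
  volume.withDensity fun x => ENNReal.ofReal
    (β * Real.Gamma ((m : ℝ) / 2) /
        (Real.pi ^ ((m : ℝ) / 2) * Real.Gamma ((m : ℝ) / (2 * β)) *
          (2 : ℝ) ^ ((m : ℝ) / (2 * β))) *
      Real.exp (-(1 / 2) * ‖x‖ ^ (2 * β)))

/-- for every `β > 0`, `ε > 0` and `m ≥ 1`,
`μ_{m,β}({x : |(1/2)‖x‖^{2β} − m/(2β)| ≥ ε m/(2β)}) ≤ 2β/(ε² m)`. -/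
theorem mggd_radial_chebyshev
    (β : ℝ) (hβ : 0 < β) (ε : ℝ) (hε : 0 < ε) (m : ℕ) (hm : 1 ≤ m) :
    mggdStd m β {x : EuclideanSpace ℝ (Fin m) |
        ε * ((m : ℝ) / (2 * β)) ≤ |(1 / 2) * ‖x‖ ^ (2 * β) - (m : ℝ) / (2 * β)|}
      ≤ ENNReal.ofReal (2 * β / (ε ^ 2 * m)) := by
  haveI : Nonempty (Fin m) := ⟨⟨0, hm⟩⟩
  haveI : Nontrivial (EuclideanSpace ℝ (Fin m)) := by
    refine nontrivial_of_ne 0 (EuclideanSpace.single ⟨0, hm⟩ 1) ?_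
    intro h
    have := congrArg (fun v => v ⟨0, hm⟩) h.symm
    simp [EuclideanSpace.single] at this
  set a : ℝ := (m : ℝ) / (2 * β) with ha_def
  have hm0 : (0:ℝ) < m := by exact_mod_cast hm
  have ha : 0 < a := by positivity
  set C : ℝ := β * Real.Gamma ((m : ℝ) / 2) /
      (Real.pi ^ ((m : ℝ) / 2) * Real.Gamma a * (2 : ℝ) ^ a) with hC_def
  have hΓa : 0 < Real.Gamma a := Real.Gamma_pos_of_pos ha
  have hΓm : 0 < Real.Gamma ((m:ℝ)/2) := Real.Gamma_pos_of_pos (by positivity)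
  have hπ : (0:ℝ) < Real.pi ^ ((m : ℝ) / 2) := Real.rpow_pos_of_pos Real.pi_pos _
  have h2a : (0:ℝ) < (2:ℝ) ^ a := Real.rpow_pos_of_pos two_pos _
  have hC : 0 < C := by positivity
  -- measurability
  have hrpow : Measurable (fun t : ℝ => t ^ (2*β)) :=
    (Real.continuous_rpow_const (by positivity)).measurable
  have hg : Measurable (fun x : EuclideanSpace ℝ (Fin m) => (1/2 : ℝ) * ‖x‖ ^ (2*β)) :=
    ((hrpow.comp measurable_norm).const_mul _)
  have hA : MeasurableSet {x : EuclideanSpace ℝ (Fin m) |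
      ε * a ≤ |(1 / 2) * ‖x‖ ^ (2 * β) - a|} :=
    measurableSet_le measurable_const ((hg.sub measurable_const).abs)
  -- the radial function
  set F : ℝ → ℝ≥0∞ := fun y => ENNReal.ofReal
    ((1/2 * y ^ (2*β) - a)^2 * (C * Real.exp (-(1/2) * y ^ (2*β)))) with hF_def
  have hF : Measurable F := by
    apply Measurable.ennreal_ofReal
    exact ((((hrpow.const_mul _).sub measurable_const).pow measurable_const)).mul
      (((hrpow.const_mul _).exp).const_mul _)
  set c : ℝ := ((ε * a)^2)⁻¹ with hc_def
  have hc : 0 ≤ c := by positivity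
  -- step 1 : measure as lintegral, and pointwise bound
  rw [mggdStd, withDensity_apply _ hA]
  have step2 : ∀ x ∈ {x : EuclideanSpace ℝ (Fin m) |
      ε * a ≤ |(1 / 2) * ‖x‖ ^ (2 * β) - a|},
      ENNReal.ofReal (C * Real.exp (-(1 / 2) * ‖x‖ ^ (2 * β)))
        ≤ ENNReal.ofReal (c * (((1/2) * ‖x‖ ^ (2*β) - a)^2
            * (C * Real.exp (-(1/2) * ‖x‖ ^ (2*β))))) := by
    intro x hx
    apply ENNReal.ofReal_le_ofReal
    have h1 : (ε*a)^2 ≤ ((1/2) * ‖x‖ ^ (2*β) - a)^2 := by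
      rw [← sq_abs ((1/2) * ‖x‖ ^ (2*β) - a)]
      exact pow_le_pow_left₀ (by positivity) hx 2
    set K : ℝ := C * Real.exp (-(1/2) * ‖x‖ ^ (2*β)) with hK
    have hK0 : 0 ≤ K := by positivity
    calc K = c * ((ε*a)^2 * K) := by rw [hc_def]; field_simp
      _ ≤ c * (((1/2) * ‖x‖ ^ (2*β) - a)^2 * K) := by
          exact mul_le_mul_of_nonneg_left (mul_le_mul_of_nonneg_right h1 hK0) hc
  calc ∫⁻ x in {x : EuclideanSpace ℝ (Fin m) |
        ε * a ≤ |(1 / 2) * ‖x‖ ^ (2 * β) - a|},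
        ENNReal.ofReal (C * Real.exp (-(1 / 2) * ‖x‖ ^ (2 * β))) ∂volume
      ≤ ∫⁻ x in {x : EuclideanSpace ℝ (Fin m) |
        ε * a ≤ |(1 / 2) * ‖x‖ ^ (2 * β) - a|},
        ENNReal.ofReal (c * (((1/2) * ‖x‖ ^ (2*β) - a)^2
            * (C * Real.exp (-(1/2) * ‖x‖ ^ (2*β))))) ∂volume := by
        apply setLIntegral_mono (by fun_prop) step2
    _ ≤ ∫⁻ x, ENNReal.ofReal (c * (((1/2) * ‖x‖ ^ (2*β) - a)^2
            * (C * Real.exp (-(1/2) * ‖x‖ ^ (2*β))))) ∂volume :=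
        setLIntegral_le_lintegral _ _
    _ = ENNReal.ofReal c * ∫⁻ x, F ‖x‖ ∂volume := by
        simp_rw [ENNReal.ofReal_mul hc]
        rw [lintegral_const_mul' _ _ ENNReal.ofReal_ne_top]
    _ ≤ ENNReal.ofReal (2 * β / (ε ^ 2 * m)) := by
        rw [aux_lintegral_norm volume hF]
        have hrank : Module.finrank ℝ (EuclideanSpace ℝ (Fin m)) = m := by
          simp [finrank_euclideanSpace]
        rw [hrank]
        -- radial lintegral
        have hradial : ∫⁻ y in Ioi (0:ℝ), ENNReal.ofReal (y ^ (m - 1)) * F y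
            = ENNReal.ofReal (C * (2 ^ a * Real.Gamma a / (2*β) * a)) := by
          have h2βa : 2*β*a = (m:ℝ) := by rw [ha_def]; field_simp
          have heq : ∀ y ∈ Ioi (0:ℝ), ENNReal.ofReal (y ^ (m - 1)) * F y
              = ENNReal.ofReal (C * (y ^ (2*β*a - 1) *
                  ((1/2 * y ^ (2*β) - a)^2 * Real.exp (-(1/2) * y ^ (2*β))))) := by
            intro y hy
            have hy0 : (0:ℝ) < y := hy
            rw [hF_def, ← ENNReal.ofReal_mul (by positivity)]
            congr 1
            have : (y : ℝ) ^ (m - 1) = y ^ (2*β*a - 1) := by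
              rw [← Real.rpow_natCast y (m-1), Nat.cast_sub hm, Nat.cast_one, h2βa]
            rw [this]; ring
          rw [setLIntegral_congr_fun measurableSet_Ioi heq]
          rw [← ofReal_integral_eq_lintegral_ofReal
            ((aux_int_radial hβ ha).const_mul C)
            ((ae_restrict_iff' measurableSet_Ioi).mpr (ae_of_all _ fun y hy =>
              mul_nonneg hC.le (mul_nonneg (Real.rpow_nonneg (le_of_lt hy) _)
                (mul_nonneg (sq_nonneg _) (Real.exp_pos _).le))))]
          rw [integral_const_mul, aux_radial_value hβ ha]
        rw [hradial, EuclideanSpace.volume_ball, Fintype.card_fin]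
        simp only [ENNReal.ofReal_one, one_pow, one_mul]
        have hvol : (0:ℝ) ≤ Real.sqrt Real.pi ^ m / Real.Gamma ((m:ℝ)/2 + 1) :=
          div_nonneg (by positivity) (Real.Gamma_pos_of_pos (by positivity)).le
        rw [← ENNReal.ofReal_natCast m, ← ENNReal.ofReal_mul (by positivity),
          ← ENNReal.ofReal_mul (mul_nonneg (Nat.cast_nonneg m) hvol), ← ENNReal.ofReal_mul hc]
        apply ENNReal.ofReal_le_ofReal
        have hΓm1 : Real.Gamma ((m:ℝ)/2 + 1) = ((m:ℝ)/2) * Real.Gamma ((m:ℝ)/2) :=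
          Real.Gamma_add_one (by positivity)
        have hsqrt : Real.sqrt Real.pi ^ m = Real.pi ^ ((m:ℝ)/2) := by
          rw [Real.sqrt_eq_rpow, ← Real.rpow_natCast (Real.pi ^ ((1:ℝ)/2)) m,
            ← Real.rpow_mul Real.pi_pos.le]
          congr 1
          push_cast
          ring
        have key : (m:ℝ) * (Real.sqrt Real.pi ^ m / Real.Gamma ((m:ℝ)/2 + 1))
            * (C * (2 ^ a * Real.Gamma a / (2*β) * a)) = a := by
          rw [hsqrt, hΓm1, hC_def]
          field_simp
        rw [key]
        have : c * a = 2 * β / (ε ^ 2 * m) := by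
          rw [hc_def, ha_def]
          field_simp
        rw [this]
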